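/- Let k_p be a positive real number satisfying k_p = exp(−(k_p + 1)) (numerically k_p ≈ 0.2785). Then for every ε > 0 and every η ∈ ℝ, 0 ≤ |η| − η·tanh(η/ε) ≤ k_p·ε. -/

import Mathlib

private lemma key_lin (k_p : ℝ) (hk_pos : 0 < k_p)
    (hk_eq : k_p = Real.exp (-(k_p + 1))) (t : ℝ) :
    t ≤ k_p * (Real.exp t + 1) := by
  have h1 : k_p * Real.exp (k_p + 1) = 1 := by
    nth_rewrite 1 [hk_eq]
    rw [← Real.exp_add, show -(k_p + 1) + (k_p + 1) = 0 by ring, Real.exp_zero]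
  have h2 := Real.add_one_le_exp (t - (k_p + 1))
  have h3 : Real.exp t = Real.exp (k_p + 1) * Real.exp (t - (k_p + 1)) := by
    rw [← Real.exp_add]; ring_nf
  have h5 : t - k_p ≤ Real.exp (t - (k_p + 1)) := by linarith
  have h6 : k_p * Real.exp t = Real.exp (t - (k_p + 1)) := by
    calc k_p * Real.exp t
        = (k_p * Real.exp (k_p + 1)) * Real.exp (t - (k_p + 1)) := by rw [h3]; ring
      _ = Real.exp (t - (k_p + 1)) := by rw [h1, one_mul]
  linarith

private lemma abs_tanh_le_one (x : ℝ) : |Real.tanh x| ≤ 1 := by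
  have hc := Real.cosh_pos x
  have he1 := Real.exp_pos x
  have he2 := Real.exp_pos (-x)
  rw [Real.tanh_eq_sinh_div_cosh, abs_div, abs_of_pos hc, div_le_one hc, abs_le,
    Real.sinh_eq, Real.cosh_eq]
  constructor <;> [linarith; linarith]

private lemma aux_nonneg (k_p : ℝ) (hk_pos : 0 < k_p)
    (hk_eq : k_p = Real.exp (-(k_p + 1))) {ε : ℝ} (hε : 0 < ε) {η : ℝ} (hη : 0 ≤ η) :
    η - η * Real.tanh (η / ε) ≤ k_p * ε := by
  set x := η / ε with hx
  have hηx : η = x * ε := by rw [hx, div_mul_cancel₀ η hε.ne']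
  set a := Real.exp x with hA
  set b := Real.exp (-x) with hB
  have ha : (0:ℝ) < a := Real.exp_pos _
  have hb : (0:ℝ) < b := Real.exp_pos _
  have hab : a * b = 1 := by rw [hA, hB, ← Real.exp_add]; simp
  have hsum : 0 < a + b := by linarith
  have htanh : Real.tanh x = (a - b) / (a + b) := by
    rw [Real.tanh_eq_sinh_div_cosh, Real.sinh_eq, Real.cosh_eq, ← hA, ← hB]
    rw [div_div_div_cancel_right₀]
    norm_num
  have hkey := key_lin k_p hk_pos hk_eq (2 * x)
  have hexp2 : Real.exp (2 * x) = a * a := by rw [hA, ← Real.exp_add]; ring_nf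
  rw [hexp2] at hkey
  rw [htanh]
  have hrw : η - η * ((a - b) / (a + b)) = (2 * η * b) / (a + b) := by
    field_simp
    ring
  rw [hrw, div_le_iff₀ hsum]
  have h5 : 2 * η ≤ k_p * ε * (a * a + 1) := by nlinarith
  have h6 : 2 * η * b ≤ k_p * ε * (a * a + 1) * b :=
    mul_le_mul_of_nonneg_right h5 hb.le
  nlinarith [h6, hab, mul_pos (mul_pos hk_pos hε) ha]

theorem tanh_abs_inequality
    (k_p : ℝ) (hk_pos : 0 < k_p) (hk_eq : k_p = Real.exp (-(k_p + 1))) :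
    ∀ ε > (0:ℝ), ∀ η : ℝ,
      0 ≤ |η| - η * Real.tanh (η / ε) ∧ |η| - η * Real.tanh (η / ε) ≤ k_p * ε := by
  intro ε hε η
  constructor
  · have h1 : η * Real.tanh (η / ε) ≤ |η| := by
      calc η * Real.tanh (η / ε) ≤ |η * Real.tanh (η / ε)| := le_abs_self _
        _ = |η| * |Real.tanh (η / ε)| := abs_mul _ _
        _ ≤ |η| * 1 := mul_le_mul_of_nonneg_left (abs_tanh_le_one _) (abs_nonneg _)
        _ = |η| := mul_one _
    linarith
  · rcases le_or_gt 0 η with hη | hη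
    · rw [abs_of_nonneg hη]
      exact aux_nonneg k_p hk_pos hk_eq hε hη
    · have h := aux_nonneg k_p hk_pos hk_eq hε (neg_nonneg.mpr hη.le) (η := -η)
      rw [neg_div, Real.tanh_neg] at h
      rw [abs_of_neg hη]
      linarith [h]
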